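/- Suppose n₁ and n₂, both less than the prime ℓ, are norms of two ℝ-linearly independent vectors v₁, v₂ in an index-ℓ sublattice M of the Eisenstein integers ℤ[ω]. Then {v₁, v₂} is a ℤ-basis of M, and in fact a Minkowski reduced basis (the angle between them, after possibly negating one vector, lies in [π/3, 2π/3]). -/

import Mathlib

/-- The primitive cube root of unity `ω = e^{2πi/3}`. -/
noncomputable def ω : ℂ := Complex.exp (2 * Real.pi * Complex.I / 3)

/-- The Eisenstein lattice `ℤ[ω] ⊂ ℂ`. -/
noncomputable def Eisenstein : AddSubgroup ℂ := AddSubgroup.closure {1, ω}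

/-- `{v, w}` is a Minkowski reduced basis of the plane lattice `M`:  it is a
ℤ-basis, `v` is a shortest nonzero vector of `M`, and `w` is shortest among
vectors of `M` that are `ℝ`-linearly independent from `v`. -/
def IsReducedBasis (M : AddSubgroup ℂ) (v w : ℂ) : Prop :=
  v ∈ M ∧ w ∈ M ∧ LinearIndependent ℝ ![v, w] ∧
  M = AddSubgroup.closure {v, w} ∧
  (∀ u ∈ M, u ≠ 0 → ‖v‖ ≤ ‖u‖) ∧
  (∀ u ∈ M, LinearIndependent ℝ ![v, u] → ‖w‖ ≤ ‖u‖)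

lemma omega_vals : ω.re = -(1/2) ∧ ω.im = Real.sqrt 3 / 2 := by
  have h : (2 * Real.pi * Complex.I / 3) = ((2 * Real.pi / 3 : ℝ) : ℂ) * Complex.I := by
    push_cast; ring
  have hω : ω = Complex.cos ((2*Real.pi/3 : ℝ):ℂ) + Complex.sin ((2*Real.pi/3:ℝ):ℂ) * Complex.I := by
    rw [ω, h, Complex.exp_mul_I]
  rw [← Complex.ofReal_cos, ← Complex.ofReal_sin] at hω
  have he : 2*Real.pi/3 = Real.pi - Real.pi/3 := by ring
  have hc : Real.cos (2*Real.pi/3) = -(1/2) := by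
    rw [he, Real.cos_pi_sub, Real.cos_pi_div_three]
  have hs : Real.sin (2*Real.pi/3) = Real.sqrt 3 / 2 := by
    rw [he, Real.sin_pi_sub, Real.sin_pi_div_three]
  constructor <;> simp [hω, hc, hs]

lemma mem_E_iff {z : ℂ} : z ∈ Eisenstein ↔ ∃ a b : ℤ, z = (a:ℂ) + (b:ℂ) * ω := by
  rw [Eisenstein, AddSubgroup.mem_closure_pair]
  constructor
  · rintro ⟨m, n, rfl⟩; exact ⟨m, n, by push_cast [zsmul_eq_mul]; ring⟩
  · rintro ⟨a, b, rfl⟩; exact ⟨a, b, by push_cast [zsmul_eq_mul]; ring⟩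

lemma linInd_iff {u v : ℂ} :
    LinearIndependent ℝ ![u, v] ↔ u.re * v.im - u.im * v.re ≠ 0 := by
  rw [LinearIndependent.pair_iff]
  constructor
  · intro h hD
    by_cases hu : u = 0
    · have := (h 1 0 (by simp [hu])).1; norm_num at this
    · by_cases him : u.im = 0
      · have hre : u.re ≠ 0 := fun h0 => hu (Complex.ext h0 him)
        have hvim : v.im = 0 := by
          rw [him] at hD
          have h0 : u.re * v.im = 0 := by linarith
          exact (mul_eq_zero.mp h0).resolve_left hre
        have := (h v.re (-u.re) (by
          apply Complex.ext <;> simp [Complex.real_smul, him, hvim] <;> ring)).2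
        simp at this
        exact hre this
      · have := (h v.im (-u.im) (by
          apply Complex.ext <;> simp [Complex.real_smul] <;> nlinarith [hD])).2
        simp at this
        exact him this
  · intro hD s t hst
    have h1 : s * u.re + t * v.re = 0 := by
      have := congrArg Complex.re hst; simpa [Complex.real_smul] using this
    have h2 : s * u.im + t * v.im = 0 := by
      have := congrArg Complex.im hst; simpa [Complex.real_smul] using this
    constructor
    · have hs : s * (u.re * v.im - u.im * v.re) = 0 := by linear_combination v.im * h1 - v.re * h2
      exact (mul_eq_zero.mp hs).resolve_right hD
    · have ht : t * (u.re * v.im - u.im * v.re) = 0 := by linear_combination -u.im * h1 + u.re * h2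
      exact (mul_eq_zero.mp ht).resolve_right hD

lemma int_key {a b : ℤ} (h : ¬(a = 0 ∧ b = 0)) : 1 ≤ a^2 - |a| * |b| + b^2 := by
  rcases eq_or_ne a 0 with rfl | ha
  · have hb : b ≠ 0 := by tauto
    have h1 : 1 ≤ |b| := Int.one_le_abs hb
    simp only [abs_zero]
    nlinarith [sq_abs b, sq_nonneg (|b| - 1)]
  · have ha1 : 1 ≤ |a| := Int.one_le_abs ha
    rcases eq_or_ne b 0 with rfl | hb
    · simp only [abs_zero]
      nlinarith [sq_abs a, sq_nonneg (|a| - 1)]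
    · have hb1 : 1 ≤ |b| := Int.one_le_abs hb
      nlinarith [sq_abs a, sq_abs b, sq_nonneg (|a| - |b|)]

lemma int_key2 {a b : ℤ} (hb : b ≠ 0) : |a| * (|b| - |a|) ≤ b^2 - 1 := by
  have hb1 : 1 ≤ |b| := Int.one_le_abs hb
  have ha : 0 ≤ |a| := abs_nonneg a
  rcases eq_or_lt_of_le hb1 with h | h
  · nlinarith [Int.le_self_sq |a|, sq_abs a, sq_abs b]
  · nlinarith [sq_abs b, sq_nonneg (2 * |a| - |b|)]

lemma abs_le_of_sq {x y : ℝ} (hy : 0 ≤ y) (h : x^2 ≤ y^2) : |x| ≤ y := by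
  nlinarith [abs_nonneg x, sq_abs x, sq_nonneg (|x| - y), sq_nonneg (|x| + y)]

lemma my_le_of_sq {x y : ℝ} (hx : 0 ≤ x) (h : x^2 ≤ y^2) (hy : 0 ≤ y) : x ≤ y := by
  have := abs_le_of_sq hy h
  rwa [abs_of_nonneg hx] at this

lemma cross_term {p nv : ℝ} (hp : 2 * |p| ≤ nv) (m n : ℤ) :
    -(|(m:ℝ)| * |(n:ℝ)| * nv) ≤ 2 * (m:ℝ) * (n:ℝ) * p := by
  have h1 : |2 * (m:ℝ) * (n:ℝ) * p| ≤ |(m:ℝ)| * |(n:ℝ)| * nv := by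
    rw [abs_mul, abs_mul, abs_mul, abs_two]
    have hmn : (0:ℝ) ≤ |(m:ℝ)| * |(n:ℝ)| := mul_nonneg (abs_nonneg _) (abs_nonneg _)
    calc 2 * |(m:ℝ)| * |(n:ℝ)| * |p| = |(m:ℝ)| * |(n:ℝ)| * (2 * |p|) := by ring
    _ ≤ |(m:ℝ)| * |(n:ℝ)| * nv := mul_le_mul_of_nonneg_left hp hmn
  linarith [neg_abs_le (2 * (m:ℝ) * (n:ℝ) * p)]

lemma Q_lb1 {nv nw p : ℝ} (h0 : 0 < nv) (hle : nv ≤ nw) (hp : 2 * |p| ≤ nv)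
    (m n : ℤ) (hmn : ¬(m = 0 ∧ n = 0)) :
    nv ≤ (m:ℝ)^2 * nv + 2*(m:ℝ)*(n:ℝ)*p + (n:ℝ)^2 * nw := by
  have hct := cross_term hp m n
  have hkey : (1:ℝ) ≤ (m:ℝ)^2 - |(m:ℝ)| * |(n:ℝ)| + (n:ℝ)^2 := by
    exact_mod_cast int_key hmn
  nlinarith [mul_le_mul_of_nonneg_left hkey h0.le,
    mul_nonneg (sq_nonneg (n:ℝ)) (sub_nonneg.2 hle)]

lemma Q_lb2 {nv nw p : ℝ} (h0 : 0 < nv) (hle : nv ≤ nw) (hp : 2 * |p| ≤ nv)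
    (m n : ℤ) (hn : n ≠ 0) :
    nw ≤ (m:ℝ)^2 * nv + 2*(m:ℝ)*(n:ℝ)*p + (n:ℝ)^2 * nw := by
  have hct := cross_term hp m n
  have hkey2 : |(m:ℝ)| * (|(n:ℝ)| - |(m:ℝ)|) ≤ (n:ℝ)^2 - 1 := by
    exact_mod_cast int_key2 hn
  have hnw : (0:ℝ) ≤ nw := le_trans h0.le hle
  have hB1 : (1:ℝ) ≤ |(n:ℝ)| := by exact_mod_cast Int.one_le_abs hn
  rcases le_total |(m:ℝ)| |(n:ℝ)| with hAB | hAB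
  · have h3 : 0 ≤ |(m:ℝ)| * (|(n:ℝ)| - |(m:ℝ)|) :=
      mul_nonneg (abs_nonneg _) (by linarith)
    nlinarith [hct, mul_le_mul_of_nonneg_left hkey2 hnw,
      mul_le_mul_of_nonneg_right hle h3, sq_abs (m:ℝ), sq_abs (n:ℝ)]
  · have h4 : (0:ℝ) ≤ nv * (|(m:ℝ)| * (|(m:ℝ)| - |(n:ℝ)|)) :=
      mul_nonneg h0.le (mul_nonneg (abs_nonneg _) (by linarith))
    have h5 : (0:ℝ) ≤ nw * ((n:ℝ)^2 - 1) := by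
      apply mul_nonneg hnw
      nlinarith [sq_abs (n:ℝ)]
    nlinarith [hct, h4, h5, sq_abs (m:ℝ), sq_abs (n:ℝ)]

lemma normQ (v w : ℂ) (m n : ℤ) :
    ‖(m:ℂ)*v + (n:ℂ)*w‖ ^ 2
      = (m:ℝ)^2 * (‖v‖ ^ 2) + 2*(m:ℝ)*(n:ℝ)*((v * starRingEnd ℂ w).re)
        + (n:ℝ)^2 * (‖w‖ ^ 2) := by
  simp only [Complex.sq_norm, Complex.normSq_apply, Complex.add_re, Complex.add_im,
    Complex.mul_re, Complex.mul_im, Complex.intCast_re, Complex.intCast_im,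
    Complex.conj_re, Complex.conj_im]
  ring

lemma aux_reduced (M : AddSubgroup ℂ) (v w : ℂ) (hv : v ∈ M) (hw : w ∈ M)
    (hind : LinearIndependent ℝ ![v, w])
    (hMeq : M = AddSubgroup.closure {v, w})
    (hle : ‖v‖ ^ 2 ≤ ‖w‖ ^ 2)
    (hp : 2 * |(v * starRingEnd ℂ w).re| ≤ ‖v‖ ^ 2) :
    IsReducedBasis M v w := by
  have hv0 : v ≠ 0 := by
    intro h
    rw [LinearIndependent.pair_iff] at hind
    have := (hind 1 0 (by simp [h])).1
    norm_num at this
  have h0 : 0 < ‖v‖ ^ 2 := pow_pos (norm_pos_iff.mpr hv0) 2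
  have hrep : ∀ u ∈ M, ∃ m n : ℤ, u = (m:ℂ)*v + (n:ℂ)*w := by
    intro u hu
    rw [hMeq, AddSubgroup.mem_closure_pair] at hu
    obtain ⟨m, n, hmn⟩ := hu
    exact ⟨m, n, by rw [← hmn]; push_cast [zsmul_eq_mul]; ring⟩
  refine ⟨hv, hw, hind, hMeq, ?_, ?_⟩
  · intro u hu hu0
    obtain ⟨m, n, rfl⟩ := hrep u hu
    have hmn : ¬(m = 0 ∧ n = 0) := by
      rintro ⟨rfl, rfl⟩; simp at hu0
    have hq := normQ v w m n
    have hlb := Q_lb1 h0 hle hp m n hmn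
    exact my_le_of_sq (norm_nonneg v) (by rw [hq]; linarith) (norm_nonneg _)
  · intro u hu hindu
    obtain ⟨m, n, rfl⟩ := hrep u hu
    have hn : n ≠ 0 := by
      rintro rfl
      rw [linInd_iff] at hindu
      apply hindu
      simp only [Complex.add_re, Complex.add_im, Complex.mul_re, Complex.mul_im,
        Complex.intCast_re, Complex.intCast_im]
      ring
    have hq := normQ v w m n
    have hlb := Q_lb2 h0 hle hp m n hn
    exact my_le_of_sq (norm_nonneg w) (by rw [hq]; linarith) (norm_nonneg _)

set_option maxHeartbeats 2000000 in
/-- If an index-`ℓ` sublattice `M` of `ℤ[ω]` contains `ℝ`-linearly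
independent vectors `v₁, v₂` of norms `n₁, n₂ ≤ ℓ`, then `{v₁, v₂}` is a
ℤ-basis of `M`, indeed a Minkowski reduced basis; in particular (after
possibly negating one vector) the angle between them lies in `[π/3, 2π/3]`,
i.e. `|⟨v₁, v₂⟩| ≤ ½ |v₁| |v₂|`. -/
theorem short_vectors_give_reduced_basis (ℓ : ℕ) (hℓ : ℓ.Prime)
    (M : AddSubgroup ℂ) (hM : M ≤ Eisenstein)
    (hidx : (M.addSubgroupOf Eisenstein).index = ℓ)
    (v₁ v₂ : ℂ) (hv₁ : v₁ ∈ M) (hv₂ : v₂ ∈ M)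
    (hind : LinearIndependent ℝ ![v₁, v₂])
    (n₁ n₂ : ℕ) (hn₁ : ‖v₁‖ ^ 2 = n₁) (hn₂ : ‖v₂‖ ^ 2 = n₂)
    (h₁ : n₁ ≤ ℓ) (h₂ : n₂ ≤ ℓ) :
    M = AddSubgroup.closure {v₁, v₂} ∧
    (IsReducedBasis M v₁ v₂ ∨ IsReducedBasis M v₂ v₁) ∧
    |(v₁ * starRingEnd ℂ v₂).re| ≤ (1 / 2) * (‖v₁‖ * ‖v₂‖) := by
  have hℓ2 : 2 ≤ ℓ := hℓ.two_le
  have hzmul : ∀ (k : ℤ) (u : ℂ), u ∈ M → (k:ℂ) * u ∈ M := fun k u hu => by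
    simpa [zsmul_eq_mul] using M.zsmul_mem hu k
  have hlE : ∀ z ∈ Eisenstein, (ℓ:ℂ) * z ∈ M := by
    intro z hz
    have h := AddSubgroup.nsmul_index_mem (M.addSubgroupOf Eisenstein) (⟨z, hz⟩ : Eisenstein)
    rw [hidx, AddSubgroup.mem_addSubgroupOf] at h
    have he : ((ℓ • (⟨z, hz⟩ : Eisenstein) : Eisenstein) : ℂ) = (ℓ:ℂ) * z := by
      push_cast [nsmul_eq_mul]; rfl
    rwa [he] at h
  have key : ∀ x y x' y' : ℤ, ((x:ℂ) + (y:ℂ)*ω ∈ M) → ((x':ℂ) + (y':ℂ)*ω ∈ M) →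
      (ℓ:ℤ) ∣ (x*y' - y*x') := by
    have hME : ∀ _ : Eisenstein ≤ M, False := by
      intro hEM
      have h1 : (M.addSubgroupOf Eisenstein).index = 1 := by
        rw [AddSubgroup.index_eq_one, AddSubgroup.addSubgroupOf_eq_top]; exact hEM
      rw [hidx] at h1; exact hℓ.one_lt.ne' h1
    intro x y x' y' hu hw
    by_contra hnd
    apply hME
    have hgcd : Nat.Coprime ℓ (x*y' - y*x').natAbs :=
      (Nat.Prime.coprime_iff_not_dvd hℓ).mpr (fun hdvd => hnd
        ((Int.natCast_dvd_natCast.mpr hdvd).trans (Int.natAbs_dvd.mpr dvd_rfl)))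
    have hcop : IsCoprime ((ℓ:ℕ):ℤ) (x*y' - y*x') := by
      rw [Int.isCoprime_iff_gcd_eq_one]
      simpa [Int.gcd, Int.natAbs_natCast] using hgcd
    obtain ⟨r, s, hrs⟩ := hcop
    intro z hz
    obtain ⟨g, h, rfl⟩ := mem_E_iff.mp hz
    have hδz : ((x*y' - y*x' : ℤ):ℂ) * ((g:ℂ) + (h:ℂ)*ω)
        = ((g*y' - h*x' : ℤ):ℂ) * ((x:ℂ)+(y:ℂ)*ω) + ((x*h - g*y : ℤ):ℂ) * ((x':ℂ)+(y':ℂ)*ω) := by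
      push_cast; ring
    have h1 : ((x*y' - y*x' : ℤ):ℂ) * ((g:ℂ)+(h:ℂ)*ω) ∈ M := by
      rw [hδz]; exact M.add_mem (hzmul _ _ hu) (hzmul _ _ hw)
    have h2 : (ℓ:ℂ) * ((g:ℂ)+(h:ℂ)*ω) ∈ M := hlE _ hz
    have hcomb : (g:ℂ)+(h:ℂ)*ω = (r:ℂ)*((ℓ:ℂ)*((g:ℂ)+(h:ℂ)*ω))
        + (s:ℂ)*(((x*y' - y*x':ℤ):ℂ)*((g:ℂ)+(h:ℂ)*ω)) := by
      have hC : ((r * ℓ + s * (x*y' - y*x') : ℤ) : ℂ) = 1 := by rw [hrs]; norm_num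
      push_cast at hC ⊢
      linear_combination (-((g:ℂ)+(h:ℂ)*ω)) * hC
    rw [hcomb]
    exact M.add_mem (hzmul r _ h2) (hzmul s _ h1)
  obtain ⟨a, b, hab⟩ := mem_E_iff.mp (hM hv₁)
  obtain ⟨c, d, hcd⟩ := mem_E_iff.mp (hM hv₂)
  obtain ⟨hre, him⟩ := omega_vals
  obtain ⟨p, hp⟩ : ∃ q : ℝ, (v₁ * starRingEnd ℂ v₂).re = q := ⟨_, rfl⟩
  obtain ⟨D, hD⟩ : ∃ q : ℝ, v₁.re * v₂.im - v₁.im * v₂.re = q := ⟨_, rfl⟩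
  have hsq3 : Real.sqrt 3 ^ 2 = 3 := Real.sq_sqrt (by norm_num)
  have hDδ : D = ((a*d - b*c : ℤ):ℝ) * (Real.sqrt 3 / 2) := by
    rw [← hD, hab, hcd]
    simp only [Complex.add_re, Complex.add_im, Complex.mul_re, Complex.mul_im,
      Complex.intCast_re, Complex.intCast_im, hre, him]
    push_cast
    ring
  have hD0 : D ≠ 0 := hD ▸ linInd_iff.mp hind
  have hDp : D^2 + p^2 = (n₁:ℝ) * (n₂:ℝ) := by
    rw [← hn₁, ← hn₂, ← hD, ← hp]
    simp only [Complex.sq_norm, Complex.normSq_apply, Complex.mul_re,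
      Complex.conj_re, Complex.conj_im]
    ring
  have hδdvd : (ℓ:ℤ) ∣ (a*d - b*c) := key a b c d (hab ▸ hv₁) (hcd ▸ hv₂)
  have hδ0 : (a*d - b*c : ℤ) ≠ 0 := by
    intro h
    apply hD0
    rw [hDδ, h]
    norm_num
  have hn12ℓ : (n₁:ℝ) * (n₂:ℝ) ≤ (ℓ:ℝ)^2 := by
    have e1 : (n₁:ℝ) ≤ (ℓ:ℝ) := by exact_mod_cast h₁
    have e2 : (n₂:ℝ) ≤ (ℓ:ℝ) := by exact_mod_cast h₂
    have e3 : (0:ℝ) ≤ (n₁:ℝ) := by positivity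
    have e4 : (0:ℝ) ≤ (n₂:ℝ) := by positivity
    nlinarith
  have hZ : 3 * (a*d - b*c)^2 ≤ 4 * (ℓ:ℤ)^2 := by
    have hr : 3 * ((a*d - b*c : ℤ):ℝ)^2 ≤ 4 * (ℓ:ℝ)^2 := by
      have hDsq : D^2 = ((a*d - b*c : ℤ):ℝ)^2 * 3 / 4 := by
        rw [hDδ]; rw [mul_pow, div_pow, hsq3]; ring
      nlinarith [sq_nonneg p, hDp, hn12ℓ]
    exact_mod_cast hr
  obtain ⟨k, hk⟩ := hδdvd
  have hk0 : k ≠ 0 := by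
    rintro rfl
    simp at hk
    exact hδ0 hk
  have hksq : k^2 = 1 := by
    have hℓZ : (2:ℤ) ≤ (ℓ:ℤ) := by exact_mod_cast hℓ2
    have hℓsq : (4:ℤ) ≤ (ℓ:ℤ)^2 := by nlinarith
    have hZ' : 3*((ℓ:ℤ)*k)^2 ≤ 4*(ℓ:ℤ)^2 := by rw [← hk]; exact hZ
    have h1 : k^2 ≤ 1 := by
      by_contra hcon
      push_neg at hcon
      have hk2 : 2 ≤ k^2 := hcon
      have := mul_le_mul_of_nonneg_left hk2 (show (0:ℤ) ≤ (ℓ:ℤ)^2 by positivity)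
      nlinarith [hZ']
    have h2 : 1 ≤ k^2 := by nlinarith [Int.one_le_abs hk0, sq_abs k]
    omega
  have hk1 : k = 1 ∨ k = -1 :=
    Int.isUnit_iff.mp (IsUnit.of_mul_eq_one (a := k) k (by linear_combination hksq))
  have hδsq : ((a*d - b*c : ℤ):ℝ)^2 = (ℓ:ℝ)^2 := by
    have : (a*d - b*c)^2 = (ℓ:ℤ)^2 := by
      rcases hk1 with rfl | rfl <;> rw [hk] <;> ring
    exact_mod_cast this
  have hsub : AddSubgroup.closure {v₁, v₂} ≤ M := by
    rw [AddSubgroup.closure_le]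
    rw [Set.insert_subset_iff, Set.singleton_subset_iff]
    exact ⟨hv₁, hv₂⟩
  have hℓC : ((ℓ:ℕ):ℂ) ≠ 0 := Nat.cast_ne_zero.mpr (by omega)
  have hMN : M = AddSubgroup.closure {v₁, v₂} := by
    apply le_antisymm _ hsub
    intro z hz
    obtain ⟨g, h, hgh⟩ := mem_E_iff.mp (hM hz)
    obtain ⟨s', hs'⟩ := key g h c d (hgh ▸ hz) (hcd ▸ hv₂)
    obtain ⟨t', ht'⟩ := key a b g h (hab ▸ hv₁) (hgh ▸ hz)
    have hid : ((a*d - b*c : ℤ):ℂ) * z = ((g*d - h*c : ℤ):ℂ) * v₁ + ((a*h - b*g : ℤ):ℂ) * v₂ := by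
      rw [hab, hcd, hgh]; push_cast; ring
    have hkz : (k:ℂ) * z = (s':ℂ) * v₁ + (t':ℂ) * v₂ := by
      apply mul_left_cancel₀ hℓC
      have hδC : ((a*d-b*c : ℤ):ℂ) = (ℓ:ℂ) * (k:ℂ) := by
        push_cast [hk]; ring
      calc (ℓ:ℂ) * ((k:ℂ)*z) = ((a*d-b*c:ℤ):ℂ) * z := by rw [hδC]; ring
      _ = ((g*d - h*c : ℤ):ℂ) * v₁ + ((a*h - b*g : ℤ):ℂ) * v₂ := hid
      _ = (ℓ:ℂ) * ((s':ℂ) * v₁ + (t':ℂ) * v₂) := by rw [hs', ht']; push_cast; ring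
    rw [AddSubgroup.mem_closure_pair]
    rcases hk1 with rfl | rfl
    · refine ⟨s', t', ?_⟩
      push_cast at hkz
      rw [zsmul_eq_mul, zsmul_eq_mul]
      linear_combination -hkz
    · refine ⟨-s', -t', ?_⟩
      push_cast at hkz
      rw [zsmul_eq_mul, zsmul_eq_mul]
      push_cast
      linear_combination hkz
  have hpsq : p^2 + 3/4 * (ℓ:ℝ)^2 = (n₁:ℝ) * (n₂:ℝ) := by
    have hDsq : D^2 = ((a*d - b*c : ℤ):ℝ)^2 * 3 / 4 := by
      rw [hDδ]; rw [mul_pow, div_pow, hsq3]; ring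
    rw [hδsq] at hDsq
    nlinarith [hDp]
  have habs12 : (‖v₁‖ * ‖v₂‖)^2 = (n₁:ℝ) * (n₂:ℝ) := by
    rw [mul_pow, hn₁, hn₂]
  rw [hp]
  have hthird : |p| ≤ (1 / 2) * (‖v₁‖ * ‖v₂‖) := by
    apply abs_le_of_sq (by positivity)
    rw [mul_pow, habs12]
    nlinarith [hpsq, hn12ℓ]
  refine ⟨hMN, ?_, hthird⟩
  have hpsymm : (v₂ * starRingEnd ℂ v₁).re = p := by
    rw [← hp]
    simp only [Complex.mul_re, Complex.conj_re, Complex.conj_im]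
    ring
  rcases le_total n₁ n₂ with hc12 | hc12
  · left
    apply aux_reduced M v₁ v₂ hv₁ hv₂ hind hMN
    · rw [hn₁, hn₂]; exact_mod_cast hc12
    · rw [hn₁, hp]
      have h4 : (2 * |p|)^2 ≤ (n₁:ℝ)^2 := by
        have e2 : (n₂:ℝ) ≤ (ℓ:ℝ) := by exact_mod_cast h₂
        have e1 : (n₁:ℝ) ≤ (ℓ:ℝ) := by exact_mod_cast h₁
        have e3 : (0:ℝ) ≤ (n₁:ℝ) := by positivity
        rw [mul_pow, sq_abs]
        nlinarith [hpsq]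
      have := abs_le_of_sq (y := (n₁:ℝ)) (by positivity) h4
      rwa [abs_of_nonneg (by positivity)] at this
  · right
    have hind' : LinearIndependent ℝ ![v₂, v₁] := by
      rw [linInd_iff]
      intro h
      apply hD0
      rw [← hD]
      linarith [h]
    apply aux_reduced M v₂ v₁ hv₂ hv₁ hind' (by rw [hMN, Set.pair_comm])
    · rw [hn₁, hn₂]; exact_mod_cast hc12
    · rw [hn₂, hpsymm]
      have h4 : (2 * |p|)^2 ≤ (n₂:ℝ)^2 := by
        have e2 : (n₂:ℝ) ≤ (ℓ:ℝ) := by exact_mod_cast h₂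
        have e1 : (n₁:ℝ) ≤ (ℓ:ℝ) := by exact_mod_cast h₁
        have e3 : (0:ℝ) ≤ (n₂:ℝ) := by positivity
        rw [mul_pow, sq_abs]
        nlinarith [hpsq]
      have := abs_le_of_sq (y := (n₂:ℝ)) (by positivity) h4
      rwa [abs_of_nonneg (by positivity)] at this
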